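/- The sequence of Apéry numbers A_n is strictly log-convex: A_n^2 < A_{n-1} A_{n+1} for all n ≥ 1. -/

import Mathlib

set_option maxHeartbeats 1000000

/-- The Apéry numbers `A_n = Σ_{k=0}^n C(n,k)^2 C(n+k,k)^2`. -/
def aperyA (n : ℕ) : ℕ :=
  ∑ k ∈ Finset.range (n + 1), (Nat.choose n k) ^ 2 * (Nat.choose (n + k) k) ^ 2

namespace AperyAux

/-- The summand, as a rational number. -/
def F (n k : ℕ) : ℚ := ((n.choose k : ℚ))^2 * (((n+k).choose k : ℚ))^2

/-- The Zeilberger certificate (shifted by one in the second index). -/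
def g (n : ℕ) : ℕ → ℚ
  | 0 => 0
  | (j+1) => 4*(2*(n:ℚ)+3)*((j:ℚ)*(2*(j:ℚ)+1) - (2*(n:ℚ)+3)^2) * F (n+1) j

lemma F_zero {n k : ℕ} (h : n < k) : F n k = 0 := by
  simp [F, Nat.choose_eq_zero_of_lt h]

lemma abstract_key (e j a b c1 c2 d1 d2 ee f : ℚ)
    (he : 0 < e + 1) (he2 : 0 < e + 2) (hj2 : 0 < j + 2 + e) (hj3 : 0 < j + 3 + e)
    (q1 : a*(j+2+e) = c1*(e+1)) (q2 : c1*(j+3+e) = c2*(e+2))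
    (q3 : c1*(j+1) = ee*(e+2)) (q4 : b*(2*j+3+e) = d1*(j+2+e))
    (q5 : d1*(2*j+4+e) = d2*(j+3+e)) (q6 : b*(j+1) = f*(j+2+e)) :
    (j+3+e)^3*(c2*d2)^2 + (j+2+e)^3*(a*b)^2
      - (34*(j+2+e)^3+51*(j+2+e)^2+27*(j+2+e)+5)*(c1*d1)^2
    = 4*(2*j+5+2*e)*((j+1)*(2*j+3) - (2*j+5+2*e)^2)*(c1*d1)^2
      - 4*(2*j+5+2*e)*(j*(2*j+1) - (2*j+5+2*e)^2)*(ee*f)^2 := by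
  have hc1 : c1 = a*(j+2+e)/(e+1) := by field_simp; linarith
  have hc2 : c2 = c1*(j+3+e)/(e+2) := by field_simp; linarith
  have hee : ee = c1*(j+1)/(e+2) := by field_simp; linarith
  have hd1 : d1 = b*(2*j+3+e)/(j+2+e) := by field_simp; linarith
  have hd2 : d2 = d1*(2*j+4+e)/(j+3+e) := by field_simp; linarith
  have hf : f = b*(j+1)/(j+2+e) := by field_simp; linarith
  subst hc2 hd2 hee hf hc1 hd1
  field_simp
  ring

lemma abstract_bd1 (n u v w : ℚ) (hn1 : 0 < n+1) (hn2 : 0 < n+2)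
    (h1 : v*(n+1) = u*(2*n+2)) (h2 : w*(n+2) = v*(2*n+3)) :
    (n+2)^3*((n+2)*w)^2 - (34*(n+1)^3+51*(n+1)^2+27*(n+1)+5)*v^2
    = 4*(2*n+3)*((n+1)*(2*n+3)-(2*n+3)^2)*v^2
      - 4*(2*n+3)*((n:ℚ)*(2*n+1)-(2*n+3)^2)*((n+1)*u)^2 := by
  have h2n : (0:ℚ) < 2*n+2 := by linarith
  have hu : u = v*(n+1)/(2*n+2) := by rw [eq_div_iff h2n.ne']; linarith
  have hw : w = v*(2*n+3)/(n+2) := by field_simp; linarith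
  subst hu hw
  field_simp
  ring

lemma abstract_bd2 (n v w z : ℚ) (hn2 : 0 < n+2)
    (h2 : w*(n+2) = v*(2*n+3)) (h3 : z*(n+2) = w*(2*n+4)) :
    (n+2)^3*z^2 = -(4*(2*n+3)*((n+1)*(2*n+3)-(2*n+3)^2))*v^2 := by
  have hw : w = v*(2*n+3)/(n+2) := by field_simp; linarith
  subst hw
  have hz : z = v*(2*n+3)*(2*n+4)/((n+2)*(n+2)) := by
    have : (0:ℚ) < (n+2)*(n+2) := by positivity
    field_simp at h3 ⊢
    linarith [h3]
  subst hz
  field_simp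
  ring

lemma key_bd1 (n : ℕ) :
    ((n:ℚ)+2)^3 * F (n+2) (n+1) + ((n:ℚ)+1)^3 * F n (n+1)
      - (34*((n:ℚ)+1)^3+51*((n:ℚ)+1)^2+27*((n:ℚ)+1)+5) * F (n+1) (n+1)
    = g n (n+1+1) - g n (n+1) := by
  have e1 : n + 2 + (n+1) = 2*n+3 := by omega
  have e2 : n + 1 + (n+1) = 2*n+2 := by omega
  have e3 : n + 1 + n = 2*n+1 := by omega
  simp only [g]
  rw [F_zero (Nat.lt_succ_self n)]
  simp only [F, e1, e2, e3, Nat.choose_succ_self_right, Nat.choose_self]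
  have n1 : (2*n+2) * (2*n+1).choose n = (2*n+2).choose (n+1) * (n+1) := by
    have h := Nat.add_one_mul_choose_eq (2*n+1) n
    rw [show 2*n+1+1 = 2*n+2 from by omega] at h
    exact h
  have n2 : (2*n+2).choose (n+1) * (2*n+3) = (2*n+3).choose (n+1) * (n+2) := by
    have := Nat.choose_mul_succ_eq (2*n+2) (n+1)
    simpa [show 2*n+2+1 = 2*n+3 by omega, show 2*n+3-(n+1) = n+2 by omega] using this
  have n1' := congrArg (fun t : ℕ => (t : ℚ)) n1
  push_cast at n1'
  have q1 : ((2*n+2).choose (n+1) : ℚ) * ((n:ℚ)+1)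
      = ((2*n+1).choose n : ℚ) * (2*(n:ℚ)+2) := by linear_combination -n1'
  have q2 : ((2*n+3).choose (n+1) : ℚ) * ((n:ℚ)+2)
      = ((2*n+2).choose (n+1) : ℚ) * (2*(n:ℚ)+3) := by exact_mod_cast n2.symm
  have KEY := abstract_bd1 (n:ℚ) ((2*n+1).choose n : ℚ) ((2*n+2).choose (n+1) : ℚ)
    ((2*n+3).choose (n+1) : ℚ) (by positivity) (by positivity) q1 q2
  push_cast at KEY ⊢
  linear_combination KEY

lemma key_bd2 (n : ℕ) :
    ((n:ℚ)+2)^3 * F (n+2) (n+2) + ((n:ℚ)+1)^3 * F n (n+2)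
      - (34*((n:ℚ)+1)^3+51*((n:ℚ)+1)^2+27*((n:ℚ)+1)+5) * F (n+1) (n+2)
    = g n (n+2+1) - g n (n+2) := by
  have e1 : n + 2 + (n+2) = 2*n+4 := by omega
  have e2 : n + 1 + (n+1) = 2*n+2 := by omega
  simp only [g]
  rw [F_zero (show n < n+2 by omega), F_zero (show n+1 < n+2 by omega)]
  simp only [F, e1, e2, Nat.choose_self]
  have n2 : (2*n+2).choose (n+1) * (2*n+3) = (2*n+3).choose (n+1) * (n+2) := by
    have := Nat.choose_mul_succ_eq (2*n+2) (n+1)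
    simpa [show 2*n+2+1 = 2*n+3 by omega, show 2*n+3-(n+1) = n+2 by omega] using this
  have n3 : (2*n+4) * (2*n+3).choose (n+1) = (2*n+4).choose (n+2) * (n+2) := by
    have h := Nat.add_one_mul_choose_eq (2*n+3) (n+1)
    rw [show 2*n+3+1 = 2*n+4 from by omega, show n+1+1 = n+2 from by omega] at h
    exact h
  have n3' := congrArg (fun t : ℕ => (t : ℚ)) n3
  push_cast at n3'
  have q2 : ((2*n+3).choose (n+1) : ℚ) * ((n:ℚ)+2)
      = ((2*n+2).choose (n+1) : ℚ) * (2*(n:ℚ)+3) := by exact_mod_cast n2.symm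
  have q3 : ((2*n+4).choose (n+2) : ℚ) * ((n:ℚ)+2)
      = ((2*n+3).choose (n+1) : ℚ) * (2*(n:ℚ)+4) := by linear_combination -n3' 
  have KEY := abstract_bd2 (n:ℚ) ((2*n+2).choose (n+1) : ℚ)
    ((2*n+3).choose (n+1) : ℚ) ((2*n+4).choose (n+2) : ℚ) (by positivity) q2 q3
  push_cast at KEY ⊢
  linear_combination KEY

lemma key (n k : ℕ) :
    ((n:ℚ)+2)^3 * F (n+2) k + ((n:ℚ)+1)^3 * F n k
      - (34*((n:ℚ)+1)^3+51*((n:ℚ)+1)^2+27*((n:ℚ)+1)+5) * F (n+1) k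
    = g n (k+1) - g n k := by
  rcases k with _ | j
  · -- k = 0
    simp only [F, g, Nat.choose_zero_right, Nat.add_zero, Nat.cast_one]
    push_cast
    ring
  rcases lt_or_ge n (j+1) with hlt | hle
  · -- k = j+1 > n : boundary cases
    rcases Nat.lt_or_ge (j+1) (n+3) with hlt3 | hge3
    · have hj : j = n ∨ j = n + 1 := by omega
      rcases hj with h | h
      · rw [h]; exact key_bd1 n
      · rw [h, show n+1+1 = n+2 from by omega]
        exact key_bd2 n
    · -- j+1 ≥ n+3 : everything vanishes
      have h1 : F (n+2) (j+1) = 0 := F_zero (by omega)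
      have h2 : F n (j+1) = 0 := F_zero (by omega)
      have h3 : F (n+1) (j+1) = 0 := F_zero (by omega)
      have h4 : F (n+1) j = 0 := F_zero (by omega)
      simp [g, h1, h2, h3, h4]
  · -- 1 ≤ k = j+1 ≤ n : generic case
    obtain ⟨e, rfl⟩ := Nat.exists_eq_add_of_le hle
    have e1 : j + 1 + e + 2 = j+3+e := by omega
    have e2 : j+3+e + (j+1) = 2*j+4+e := by omega
    have e3 : j + 1 + e + (j+1) = 2*j+2+e := by omega
    have e4 : j + 1 + e + 1 = j+2+e := by omega
    have e5 : j+2+e + (j+1) = 2*j+3+e := by omega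
    have e6 : j+2+e + j = 2*j+2+e := by omega
    simp only [F, g, e1, e2, e3, e4, e5, e6]
    have n1 : (j+1+e).choose (j+1) * (j+2+e) = (j+2+e).choose (j+1) * (e+1) := by
      have := Nat.choose_mul_succ_eq (j+1+e) (j+1)
      simpa [show j+1+e+1 = j+2+e by omega, show j+2+e-(j+1) = e+1 by omega] using this
    have n2 : (j+2+e).choose (j+1) * (j+3+e) = (j+3+e).choose (j+1) * (e+2) := by
      have := Nat.choose_mul_succ_eq (j+2+e) (j+1)
      simpa [show j+2+e+1 = j+3+e by omega, show j+3+e-(j+1) = e+2 by omega] using this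
    have n3 : (j+2+e).choose (j+1) * (j+1) = (j+2+e).choose j * (e+2) := by
      have := Nat.choose_succ_right_eq (j+2+e) j
      simpa [show j+2+e-j = e+2 by omega] using this
    have n4 : (2*j+2+e).choose (j+1) * (2*j+3+e) = (2*j+3+e).choose (j+1) * (j+2+e) := by
      have := Nat.choose_mul_succ_eq (2*j+2+e) (j+1)
      simpa [show 2*j+2+e+1 = 2*j+3+e by omega, show 2*j+3+e-(j+1) = j+2+e by omega] using this
    have n5 : (2*j+3+e).choose (j+1) * (2*j+4+e) = (2*j+4+e).choose (j+1) * (j+3+e) := by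
      have := Nat.choose_mul_succ_eq (2*j+3+e) (j+1)
      simpa [show 2*j+3+e+1 = 2*j+4+e by omega, show 2*j+4+e-(j+1) = j+3+e by omega] using this
    have n6 : (2*j+2+e).choose (j+1) * (j+1) = (2*j+2+e).choose j * (j+2+e) := by
      have := Nat.choose_succ_right_eq (2*j+2+e) j
      simpa [show 2*j+2+e-j = j+2+e by omega] using this
    have q1 : ((j+1+e).choose (j+1) : ℚ) * ((j:ℚ)+2+e) = ((j+2+e).choose (j+1) : ℚ) * ((e:ℚ)+1) := by
      exact_mod_cast n1
    have q2 : ((j+2+e).choose (j+1) : ℚ) * ((j:ℚ)+3+e) = ((j+3+e).choose (j+1) : ℚ) * ((e:ℚ)+2) := by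
      exact_mod_cast n2
    have q3 : ((j+2+e).choose (j+1) : ℚ) * ((j:ℚ)+1) = ((j+2+e).choose j : ℚ) * ((e:ℚ)+2) := by
      exact_mod_cast n3
    have q4 : ((2*j+2+e).choose (j+1) : ℚ) * (2*(j:ℚ)+3+e) = ((2*j+3+e).choose (j+1) : ℚ) * ((j:ℚ)+2+e) := by
      exact_mod_cast n4
    have q5 : ((2*j+3+e).choose (j+1) : ℚ) * (2*(j:ℚ)+4+e) = ((2*j+4+e).choose (j+1) : ℚ) * ((j:ℚ)+3+e) := by
      exact_mod_cast n5
    have q6 : ((2*j+2+e).choose (j+1) : ℚ) * ((j:ℚ)+1) = ((2*j+2+e).choose j : ℚ) * ((j:ℚ)+2+e) := by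
      exact_mod_cast n6
    have KEY := abstract_key (e:ℚ) (j:ℚ) ((j+1+e).choose (j+1) : ℚ) ((2*j+2+e).choose (j+1) : ℚ)
      ((j+2+e).choose (j+1) : ℚ) ((j+3+e).choose (j+1) : ℚ) ((2*j+3+e).choose (j+1) : ℚ)
      ((2*j+4+e).choose (j+1) : ℚ) ((j+2+e).choose j : ℚ) ((2*j+2+e).choose j : ℚ)
      (by positivity) (by positivity) (by positivity) (by positivity) q1 q2 q3 q4 q5 q6
    push_cast at KEY ⊢
    linear_combination KEY

lemma sumF (m N : ℕ) (h : m + 1 ≤ N) :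
    ∑ k ∈ Finset.range N, F m k = (aperyA m : ℚ) := by
  rw [aperyA]
  push_cast
  refine (Finset.sum_subset (Finset.range_subset_range.2 h) ?_).symm
  intro x _ hx
  have : m < x := by simp only [Finset.mem_range] at hx; omega
  simpa [F] using F_zero this

lemma recur (n : ℕ) :
    ((n:ℚ)+2)^3 * (aperyA (n+2) : ℚ) + ((n:ℚ)+1)^3 * (aperyA n : ℚ)
    = (34*((n:ℚ)+1)^3+51*((n:ℚ)+1)^2+27*((n:ℚ)+1)+5) * (aperyA (n+1) : ℚ) := by
  have tel : ∑ k ∈ Finset.range (n+3), (g n (k+1) - g n k) = g n (n+3) - g n 0 :=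
    Finset.sum_range_sub (g n) (n+3)
  have hg0 : g n 0 = 0 := rfl
  have hgN : g n (n+3) = 0 := by
    have : F (n+1) (n+2) = 0 := F_zero (by omega)
    simp [g, this]
  have hsum : ∑ k ∈ Finset.range (n+3),
      (((n:ℚ)+2)^3 * F (n+2) k + ((n:ℚ)+1)^3 * F n k
        - (34*((n:ℚ)+1)^3+51*((n:ℚ)+1)^2+27*((n:ℚ)+1)+5) * F (n+1) k) = 0 := by
    rw [Finset.sum_congr rfl (fun k _ => key n k), tel, hg0, hgN, sub_zero]
  rw [Finset.sum_sub_distrib, Finset.sum_add_distrib, ← Finset.mul_sum, ← Finset.mul_sum,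
    ← Finset.mul_sum, sumF n (n+3) (by omega), sumF (n+1) (n+3) (by omega),
    sumF (n+2) (n+3) (by omega)] at hsum
  linarith [hsum]

lemma apos (n : ℕ) : 0 < aperyA n := by
  rw [aperyA]
  refine Finset.sum_pos' (fun i _ => Nat.zero_le _) ⟨0, Finset.mem_range.2 (Nat.succ_pos n), ?_⟩
  simp


lemma step (m : ℕ) :
    5 * (aperyA m : ℚ) ≤ (aperyA (m+1) : ℚ) ∧
      ((aperyA (m+1) : ℚ))^2 < (aperyA m : ℚ) * (aperyA (m+2) : ℚ) := by
  induction m with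
  | zero =>
    have h0 : aperyA 0 = 1 := by norm_num [aperyA]
    have h1 : aperyA 1 = 5 := by norm_num [aperyA, Finset.sum_range_succ]
    have h2 : aperyA 2 = 73 := by decide
    rw [h0, h1, h2]; norm_num
  | succ m ih =>
    obtain ⟨h5, hlc⟩ := ih
    have R1 := recur m
    have R2 := recur (m+1)
    rw [show m+1+2 = m+3 by omega, show m+1+1 = m+2 by omega] at R2
    push_cast at R2
    rw [show m+1+1 = m+2 by omega, show m+1+2 = m+3 by omega]
    set a0 : ℚ := (aperyA m : ℚ) with ha0
    set a1 : ℚ := (aperyA (m+1) : ℚ) with ha1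
    set a2 : ℚ := (aperyA (m+2) : ℚ) with ha2
    set a3 : ℚ := (aperyA (m+3) : ℚ) with ha3
    have p0 : 0 < a0 := by rw [ha0]; exact_mod_cast apos m
    have p1 : 0 < a1 := by rw [ha1]; exact_mod_cast apos (m+1)
    have p2 : 0 < a2 := by rw [ha2]; exact_mod_cast apos (m+2)
    have hm : (0:ℚ) ≤ (m:ℚ) := Nat.cast_nonneg m
    have key1 : ((m:ℚ)+2)^3*(a2 - 5*a1)
        = (29*(m:ℚ)^3+123*(m:ℚ)^2+171*(m:ℚ)+77)*(a1 - 5*a0)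
          + (144*(m:ℚ)^3+612*(m:ℚ)^2+852*(m:ℚ)+384)*a0 := by
      linear_combination R1
    have t1 : (0:ℚ) ≤ (29*(m:ℚ)^3+123*(m:ℚ)^2+171*(m:ℚ)+77)*(a1 - 5*a0) :=
      mul_nonneg (by positivity) (by linarith)
    have t2 : (0:ℚ) ≤ (144*(m:ℚ)^3+612*(m:ℚ)^2+852*(m:ℚ)+384)*a0 :=
      mul_nonneg (by positivity) p0.le
    have t3 : (0:ℚ) < ((m:ℚ)+2)^3 := by positivity
    have h5' : 5 * a1 ≤ a2 := by nlinarith [key1, t1, t2, t3]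
    refine ⟨h5', ?_⟩
    have keyid : ((m:ℚ)+2)^3 * ((34*((m:ℚ)+2)^3+51*((m:ℚ)+2)^2+27*((m:ℚ)+2)+5)*a1*a2
          - ((m:ℚ)+2)^3*a1^2 - ((m:ℚ)+3)^3*a2^2)
        = ((m:ℚ)+2)^6*(a0*a2 - a1^2)
          + a2*((51*((m:ℚ)+1)^4+252*((m:ℚ)+1)^3+435*((m:ℚ)+1)^2+306*((m:ℚ)+1)+77)*a1
            - (((m:ℚ)+2)^6 - ((m:ℚ)+3)^3*((m:ℚ)+1)^3)*a0) := by
      linear_combination (-(((m:ℚ)+3)^3) * a2) * R1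
    have cpos : (0:ℚ) < 51*((m:ℚ)+1)^4+252*((m:ℚ)+1)^3+435*((m:ℚ)+1)^2+306*((m:ℚ)+1)+77 := by
      positivity
    have t4 : (0:ℚ) ≤ (51*((m:ℚ)+1)^4+252*((m:ℚ)+1)^3+435*((m:ℚ)+1)^2+306*((m:ℚ)+1)+77)
        * (a1 - 5*a0) := mul_nonneg cpos.le (by linarith)
    have t6 : (0:ℚ) < (252*((m:ℚ)+1)^4+1248*((m:ℚ)+1)^3+2160*((m:ℚ)+1)^2+1524*((m:ℚ)+1)+384)
        * a0 := mul_pos (by positivity) p0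
    have t7 : (0:ℚ) <
        (51*((m:ℚ)+1)^4+252*((m:ℚ)+1)^3+435*((m:ℚ)+1)^2+306*((m:ℚ)+1)+77)*a1
          - (((m:ℚ)+2)^6 - ((m:ℚ)+3)^3*((m:ℚ)+1)^3)*a0 := by nlinarith [t4, t6]
    have t8 : (0:ℚ) < ((m:ℚ)+2)^6*(a0*a2 - a1^2) := by
      have : 0 < a0*a2 - a1^2 := by linarith [hlc]
      positivity
    have hE : (0:ℚ) < (34*((m:ℚ)+2)^3+51*((m:ℚ)+2)^2+27*((m:ℚ)+2)+5)*a1*a2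
        - ((m:ℚ)+2)^3*a1^2 - ((m:ℚ)+3)^3*a2^2 := by
      have hmul : (0:ℚ) < ((m:ℚ)+2)^3 * ((34*((m:ℚ)+2)^3+51*((m:ℚ)+2)^2+27*((m:ℚ)+2)+5)*a1*a2
          - ((m:ℚ)+2)^3*a1^2 - ((m:ℚ)+3)^3*a2^2) := by
        exact lt_of_lt_of_eq (add_pos t8 (mul_pos p2 t7)) keyid.symm
      rcases mul_pos_iff.mp hmul with h | h
      · exact h.2
      · linarith [t3, h.1]
    have keyfin : ((m:ℚ)+3)^3*(a1*a3 - a2^2)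
        = (34*((m:ℚ)+2)^3+51*((m:ℚ)+2)^2+27*((m:ℚ)+2)+5)*a1*a2
          - ((m:ℚ)+2)^3*a1^2 - ((m:ℚ)+3)^3*a2^2 := by
      linear_combination a1 * R2
    have t9 : (0:ℚ) < ((m:ℚ)+3)^3 := by positivity
    have hmul2 : (0:ℚ) < ((m:ℚ)+3)^3 * (a1*a3 - a2^2) := lt_of_lt_of_eq hE keyfin.symm
    rcases mul_pos_iff.mp hmul2 with h | h
    · linarith [h.2]
    · linarith [t9, h.1]

end AperyAux

theorem aperyA_strict_log_convex (n : ℕ) (hn : 1 ≤ n) :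
    aperyA n ^ 2 < aperyA (n - 1) * aperyA (n + 1) := by
  obtain ⟨m, rfl⟩ : ∃ m, n = m + 1 := ⟨n - 1, by omega⟩
  have h := (AperyAux.step m).2
  have h' : (aperyA (m+1))^2 < aperyA m * aperyA (m+2) := by exact_mod_cast h
  simpa [Nat.add_sub_cancel] using h'
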